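/- In the star network S_n with center node 1, external liabilities b = 1 for all nodes, external assets c = n·e₁, internal liabilities p_{1i} = 1 from the center to each peripheral node i, bailout values L = n·1, budget Λ = n, and point-mass shock X = c: (a) bailing out only the center node yields total clearing payments 2n - 1; (b) any discrete allocation z̄ ∈ {0,1}ⁿ satisfying the absolute-equality Gini constraint ∑_{j≠1}|z̄₁ - z̄_j| = 0 together with the budget constraint nᵀ(n·z̄) ≤ n must have z̄ = 0, and then the total clearing payments equal 0. -/

import Mathlib

open Matrix Finset

/-- Unbounded discrete Price of Fairness on the star network: bailing out the center
yields total clearing payments `2n - 1`, while any 0/1 allocation satisfying the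
absolute-equality Gini constraint and the budget constraint must be zero, yielding total
clearing payments `0`. -/
theorem star_unbounded_discrete_pof (n : ℕ) [NeZero n] (hn : 2 ≤ n)
    (A : Matrix (Fin n) (Fin n) ℝ)
    (hA : ∀ i j, A i j = if i = 0 ∧ j ≠ 0 then 1 / (n : ℝ) else 0)
    (p : Fin n → ℝ) (hp : ∀ i, p i = if i = 0 then (n : ℝ) else 1)
    (pbar : Fin n → ℝ)
    (hfix : ∀ j, pbar j
        = min (p j) ((Aᵀ.mulVec pbar) j + (if j = 0 then (n : ℝ) else 0)))
    (zbar : Fin n → ℝ) (hz01 : ∀ i, zbar i = 0 ∨ zbar i = 1)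
    (hgini : ∑ j ∈ Finset.univ.erase 0, |zbar 0 - zbar j| = 0)
    (hbudget : ∑ j, (n : ℝ) * zbar j ≤ (n : ℝ))
    (pbar' : Fin n → ℝ)
    (hfix' : ∀ j, pbar' j = min (p j) ((Aᵀ.mulVec pbar') j + (n : ℝ) * zbar j)) :
    (∑ j, pbar j = 2 * (n : ℝ) - 1) ∧
    (∀ i, zbar i = 0) ∧ ∑ j, pbar' j = 0 := by
  have hnpos : (0 : ℝ) < n := by positivity
  have hmul : ∀ (v : Fin n → ℝ) (j : Fin n),
      (Aᵀ.mulVec v) j = if j = 0 then 0 else (1 / n) * v 0 := by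
    intro v j
    simp only [Matrix.mulVec, dotProduct, Matrix.transpose_apply, hA]
    by_cases hj : j = 0
    · simp [hj]
    · simp only [hj, ne_eq, not_false_iff, and_true, if_neg]
      rw [Finset.sum_eq_single 0]
      · simp
      · intro i _ hi; simp [hi]
      · simp
  -- part (a)
  have hpbar0 : pbar 0 = n := by
    rw [hfix 0, hmul, hp]; simp
  have hpbarj : ∀ j : Fin n, j ≠ 0 → pbar j = 1 := by
    intro j hj
    rw [hfix j, hmul, hp]
    simp only [hj, if_neg, ite_false, hpbar0]
    rw [one_div, inv_mul_cancel₀ (ne_of_gt hnpos)]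
    simp
  have hsum : ∑ j, pbar j = 2 * (n : ℝ) - 1 := by
    rw [← Finset.add_sum_erase _ _ (Finset.mem_univ 0), hpbar0]
    rw [Finset.sum_congr rfl (fun j hj => hpbarj j (Finset.ne_of_mem_erase hj))]
    simp only [Finset.sum_const, nsmul_eq_mul, mul_one]
    have hcard : (Finset.univ.erase (0 : Fin n)).card = n - 1 := by
      rw [Finset.card_erase_of_mem (Finset.mem_univ 0), Finset.card_univ, Fintype.card_fin]
    rw [hcard]
    have : ((n - 1 : ℕ) : ℝ) = (n : ℝ) - 1 := by
      have := Nat.one_le_of_lt hn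
      push_cast [Nat.cast_sub this]; ring
    rw [this]; ring
  -- part (b): zbar = 0
  have hzall : ∀ j : Fin n, j ≠ 0 → zbar j = zbar 0 := by
    intro j hj
    have := (Finset.sum_eq_zero_iff_of_nonneg (fun i _ => abs_nonneg _)).mp hgini j
      (Finset.mem_erase.mpr ⟨hj, Finset.mem_univ j⟩)
    have := abs_eq_zero.mp this
    linarith
  have hz0 : zbar 0 = 0 := by
    rcases hz01 0 with h | h
    · exact h
    · exfalso
      have hall : ∀ j : Fin n, zbar j = 1 := by
        intro j
        by_cases hj : j = 0
        · rw [hj, h]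
        · rw [hzall j hj, h]
      have : ∑ j, (n : ℝ) * zbar j = (n : ℝ) * n := by
        simp only [hall, mul_one, Finset.sum_const, Finset.card_univ, Fintype.card_fin,
          nsmul_eq_mul]
      rw [this] at hbudget
      nlinarith [show (2 : ℝ) ≤ n by exact_mod_cast hn]
  have hzzero : ∀ i, zbar i = 0 := by
    intro i
    by_cases hi : i = 0
    · rw [hi]; exact hz0
    · rw [hzall i hi, hz0]
  -- pbar' = 0
  have hp0' : pbar' 0 = 0 := by
    rw [hfix' 0, hmul, hp, hzzero]
    simp [le_of_lt hnpos]
  have hpj' : ∀ j, pbar' j = 0 := by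
    intro j
    by_cases hj : j = 0
    · rw [hj]; exact hp0'
    · rw [hfix' j, hmul, hp, hzzero]
      simp [hj, hp0']
  exact ⟨hsum, hzzero, by simp [hpj']⟩
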